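/- arXiv:1403.6044 — 2 statements merged into one kernel-verified Lean document; each statement's English description precedes it below -/
import Mathlib

section
/- Let B be a commutative unital ring, A a unital B-algebra, and suppose A is generated as a B-module by its group of units (more generally, consider the residual algebra spanned by unitaries). Then the map φ : T ↦ T(1 ⊗ 1) from the algebra of A-bimodule endomorphisms of A ⊗_B A generated by the operators u * v : a ⊗ b ↦ a u ⊗ v b (for units u, v of A), to A ⊗_B A, is an injective algebra homomorphism onto the subalgebra A^op ⊗_B A (with multiplication (u ⊗ v)(u' ⊗ v') = u'u ⊗ vv'), i.e. the fiber square A *_B A is isomorphic to A^op ⊗_B A when B is central. -/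
open TensorProduct

/-- The `A`-bimodular operator `u * v : a ⊗ b ↦ au ⊗ vb` on `A ⊗_B A`. -/
noncomputable def starOp (B : Type*) [CommRing B] (A : Type*) [Ring A] [Algebra B A]
    (u v : A) : Module.End B (A ⊗[B] A) :=
  ((LinearMap.mulRight B u).rTensor A).comp ((LinearMap.mulLeft B v).lTensor A)

/-- The canonical `B`-linear identification `A^op ⊗_B A → A ⊗_B A`. -/
noncomputable def unopTensor (B : Type*) [CommRing B] (A : Type*) [Ring A] [Algebra B A] :
    (Aᵐᵒᵖ ⊗[B] A) →ₗ[B] (A ⊗[B] A) :=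
  TensorProduct.map ((MulOpposite.opLinearEquiv B).symm.toLinearMap) LinearMap.id

section Aux
variable (B : Type) [CommRing B] (A : Type) [Ring A] [Algebra B A]

/-- Right multiplication on the first tensor factor, as an algebra hom from `Aᵐᵒᵖ`. -/
noncomputable def rightF : Aᵐᵒᵖ →ₐ[B] Module.End B (A ⊗[B] A) where
  toFun x := (LinearMap.mulRight B x.unop).rTensor A
  map_one' := by
    change (LinearMap.mulRight B (1 : A)).rTensor A = _
    rw [LinearMap.mulRight_one, LinearMap.rTensor_id]; rfl
  map_mul' x y := by
    change (LinearMap.mulRight B (y.unop * x.unop)).rTensor A = _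
    rw [LinearMap.mulRight_mul, LinearMap.rTensor_comp]; rfl
  map_zero' := by
    have h : LinearMap.mulRight B (0 : A) = 0 := by ext a; simp
    change (LinearMap.mulRight B (0 : A)).rTensor A = _
    rw [h, LinearMap.rTensor_zero]
  map_add' x y := by
    have h : LinearMap.mulRight B (x.unop + y.unop)
        = LinearMap.mulRight B x.unop + LinearMap.mulRight B y.unop := by
      ext a; simp [mul_add]
    change (LinearMap.mulRight B (x.unop + y.unop)).rTensor A = _
    rw [h, LinearMap.rTensor_add]
  commutes' b := by
    have h : LinearMap.mulRight B (algebraMap B A b) = b • LinearMap.id := by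
      ext a; simp [Algebra.smul_def, Algebra.commutes]
    have h2 : MulOpposite.unop (algebraMap B Aᵐᵒᵖ b) = algebraMap B A b := rfl
    change (LinearMap.mulRight B (MulOpposite.unop (algebraMap B Aᵐᵒᵖ b))).rTensor A = _
    rw [h2, h, LinearMap.rTensor_smul, LinearMap.rTensor_id]
    ext x
    simp [Module.algebraMap_end_apply]

/-- Left multiplication on the second tensor factor, as an algebra hom from `A`. -/
noncomputable def leftF : A →ₐ[B] Module.End B (A ⊗[B] A) where
  toFun v := (LinearMap.mulLeft B v).lTensor A
  map_one' := by
    change (LinearMap.mulLeft B (1 : A)).lTensor A = _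
    rw [LinearMap.mulLeft_one, LinearMap.lTensor_id]; rfl
  map_mul' x y := by
    change (LinearMap.mulLeft B (x * y)).lTensor A = _
    rw [LinearMap.mulLeft_mul, LinearMap.lTensor_comp]; rfl
  map_zero' := by
    have h : LinearMap.mulLeft B (0 : A) = 0 := by ext a; simp
    change (LinearMap.mulLeft B (0 : A)).lTensor A = _
    rw [h, LinearMap.lTensor_zero]
  map_add' x y := by
    have h : LinearMap.mulLeft B (x + y)
        = LinearMap.mulLeft B x + LinearMap.mulLeft B y := by
      ext a; simp [add_mul]
    change (LinearMap.mulLeft B (x + y)).lTensor A = _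
    rw [h, LinearMap.lTensor_add]
  commutes' b := by
    have h : LinearMap.mulLeft B (algebraMap B A b) = b • LinearMap.id := by
      ext a; simp [Algebra.smul_def]
    change (LinearMap.mulLeft B (algebraMap B A b)).lTensor A = _
    rw [h, LinearMap.lTensor_smul, LinearMap.lTensor_id]
    ext x
    simp [Module.algebraMap_end_apply]

/-- The bimodule-action algebra hom `A^op ⊗_B A → End_B(A ⊗_B A)`. -/
noncomputable def psi : (Aᵐᵒᵖ ⊗[B] A) →ₐ[B] Module.End B (A ⊗[B] A) :=
  Algebra.TensorProduct.lift (rightF B A) (leftF B A) (fun x y => by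
    show _ = _
    change ((LinearMap.mulRight B x.unop).rTensor A).comp ((LinearMap.mulLeft B y).lTensor A)
      = ((LinearMap.mulLeft B y).lTensor A).comp ((LinearMap.mulRight B x.unop).rTensor A)
    rw [LinearMap.rTensor_comp_lTensor, LinearMap.lTensor_comp_rTensor])

lemma psi_tmul (u v : A) :
    psi B A ((MulOpposite.op u) ⊗ₜ[B] v) = starOp B A u v := by
  rw [psi, Algebra.TensorProduct.lift_tmul]
  rfl

lemma psi_eval (x : Aᵐᵒᵖ ⊗[B] A) :
    (psi B A x) ((1 : A) ⊗ₜ[B] (1 : A)) = unopTensor B A x := by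
  induction x with
  | zero => simp
  | tmul u v =>
      rw [← MulOpposite.op_unop u, psi_tmul B A u.unop v]
      simp [starOp, unopTensor]
  | add x y hx hy => simp [map_add, hx, hy]

lemma unopTensor_injective : Function.Injective (unopTensor B A) := by
  have : unopTensor B A
      = (TensorProduct.congr (MulOpposite.opLinearEquiv B (M := A)).symm
          (LinearEquiv.refl B A)).toLinearMap := rfl
  rw [this]
  exact (TensorProduct.congr _ _).injective

lemma psi_injective : Function.Injective (psi B A) := by
  intro x y h
  apply unopTensor_injective B A
  rw [← psi_eval, ← psi_eval, h]

end Aux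

/-- For a central extension `A/B` (`B` commutative) with `A` spanned as a
`B`-module by its units, the evaluation `φ : T ↦ T(1 ⊗ 1)` identifies the fiber square
`A *_B A` — the algebra of `A`-bimodule endomorphisms of `A ⊗_B A` generated by the
operators `u * v` for units `u, v` — with `A^op ⊗_B A` (so `φ` is an injective algebra
homomorphism onto `A^op ⊗_B A` with its multiplication `(u ⊗ v)(u' ⊗ v') = u'u ⊗ vv'`). -/
theorem stmt2 (B : Type) [CommRing B] (A : Type) [Ring A] [Algebra B A]
    (hgen : Submodule.span B {a : A | IsUnit a} = ⊤)
    (FS : Subalgebra B (Module.End B (A ⊗[B] A)))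
    (hFS : FS = Algebra.adjoin B
      {T : Module.End B (A ⊗[B] A) | ∃ u v : Aˣ, T = starOp B A (u : A) (v : A)}) :
    ∃ e : FS ≃+* (Aᵐᵒᵖ ⊗[B] A),
      (∀ (b : B) (T : FS), e ((algebraMap B FS b) * T) = (algebraMap B (Aᵐᵒᵖ ⊗[B] A) b) * e T)
      ∧ ∀ T : FS, unopTensor B A (e T)
          = T.1 ((1 : A) ⊗ₜ[B] (1 : A)) := by
  -- range of psi = FS
  have hrange : (psi B A).range = FS := by
    apply le_antisymm
    · rintro _ ⟨x, rfl⟩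
      have key : ∀ m n : A, psi B A ((MulOpposite.op m) ⊗ₜ[B] n) ∈ FS := by
        intro m n
        have hm : m ∈ Submodule.span B {a : A | IsUnit a} := hgen ▸ Submodule.mem_top
        induction hm using Submodule.span_induction generalizing n with
        | mem u hu =>
            have hn : n ∈ Submodule.span B {a : A | IsUnit a} := hgen ▸ Submodule.mem_top
            induction hn using Submodule.span_induction with
            | mem v hv =>
                obtain ⟨U, rfl⟩ := hu
                obtain ⟨V, rfl⟩ := hv
                rw [psi_tmul]
                rw [hFS]
                exact Algebra.subset_adjoin ⟨U, V, rfl⟩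
            | zero => simp only [tmul_zero, map_zero]; exact FS.zero_mem
            | add a b _ _ ha hb =>
                simp only [tmul_add, map_add]; exact FS.add_mem ha hb
            | smul c a _ ha =>
                simp only [tmul_smul, map_smul]; exact FS.smul_mem ha c
        | zero =>
            simp only [MulOpposite.op_zero, zero_tmul, map_zero]; exact FS.zero_mem
        | add a b _ _ ha hb =>
            simp only [MulOpposite.op_add, add_tmul, map_add]
            exact FS.add_mem (ha n) (hb n)
        | smul c a _ ha =>
            have : MulOpposite.op (c • a) ⊗ₜ[B] n = c • (MulOpposite.op a ⊗ₜ[B] n) := by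
              rw [MulOpposite.op_smul, smul_tmul']
            rw [this, map_smul]
            exact FS.smul_mem (ha n) c
      induction x with
      | zero => simp only [map_zero]; exact FS.zero_mem
      | tmul m n =>
          have := key m.unop n
          simpa using this
      | add x y hx hy => simp only [map_add]; exact FS.add_mem hx hy
    · rw [hFS]
      apply Algebra.adjoin_le
      rintro _ ⟨u, v, rfl⟩
      exact ⟨(MulOpposite.op (u : A)) ⊗ₜ[B] (v : A), psi_tmul B A u v⟩
  -- the equivalence
  let ψ' : (Aᵐᵒᵖ ⊗[B] A) →ₐ[B] FS :=
    (psi B A).codRestrict FS (fun x => hrange ▸ ⟨x, rfl⟩)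
  have hbij : Function.Bijective ψ' := by
    constructor
    · intro x y h
      apply psi_injective B A
      exact congrArg Subtype.val h
    · rintro ⟨T, hT⟩
      obtain ⟨x, hx⟩ := (hrange.symm ▸ hT : T ∈ (psi B A).range)
      exact ⟨x, Subtype.ext hx⟩
  let E : (Aᵐᵒᵖ ⊗[B] A) ≃ₐ[B] FS := AlgEquiv.ofBijective ψ' hbij
  refine ⟨E.symm.toRingEquiv, ?_, ?_⟩
  · intro b T
    show E.symm (algebraMap B FS b * T) = algebraMap B (Aᵐᵒᵖ ⊗[B] A) b * E.symm T
    rw [map_mul, E.symm.commutes b]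
  · intro T
    have hψ : psi B A (E.symm T) = T.1 := by
      have : ψ' (E.symm T) = T := E.apply_symm_apply T
      exact congrArg Subtype.val this
    show unopTensor B A (E.symm T) = T.1 (1 ⊗ₜ[B] 1)
    rw [← hψ, psi_eval]
end

section
/- Let G be a groupoid and define ξ_n : G^e ⋆ E^{n-1}G → Z^n G by ξ_n((α,β), (α_1,…,α_n-tuple ω)) = (α,β)·θ_n(1, ω) (with θ as in the classifying-to-cyclic map). Then ξ_n is a bijection, with inverse ω = (α_{n+1}, α_0, α_1, …, α_n) ↦ (φ_n(ω), ψ_n(ω)) where φ_n(ω) = (α_1 ⋯ α_{n+1}, α_0) ∈ G^e and ψ_n(ω) = (α_1, α_1α_2, …, α_1⋯α_n) ∈ E^{n-1}G (targets all equal). -/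
/-- A discrete groupoid presented algebraically: arrows `Γ` over objects `X`, with
source `s`, target `t`, a (total) product `mul` which is only required to behave on
composable pairs (`s α = t β`), inversion and units. -/
structure DGroupoid (X : Type*) (Γ : Type*) where
  s : Γ → X
  t : Γ → X
  mul : Γ → Γ → Γ
  inv : Γ → Γ
  unit : X → Γ
  s_inv : ∀ α, s (inv α) = t α
  t_inv : ∀ α, t (inv α) = s α
  s_mul : ∀ α β, s α = t β → s (mul α β) = s β
  t_mul : ∀ α β, s α = t β → t (mul α β) = t α
  mul_assoc' : ∀ α β γ, s α = t β → s β = t γ → mul (mul α β) γ = mul α (mul β γ)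
  s_unit : ∀ x, s (unit x) = x
  t_unit : ∀ x, t (unit x) = x
  mul_unit : ∀ α, mul α (unit (s α)) = α
  unit_mul : ∀ α, mul (unit (t α)) α = α
  mul_inv : ∀ α, mul α (inv α) = unit (t α)
  inv_mul : ∀ α, mul (inv α) α = unit (s α)

/-- `θ_n(α_0,…,α_n) = (α_n⁻¹, α_0, α_0⁻¹α_1, …, α_{n-1}⁻¹α_n)` from `E^nG` to `Z^nG`. -/
def DGroupoid.theta {X Γ : Type*} (G : DGroupoid X Γ) {n : ℕ}
    (f : Fin (n + 1) → Γ) : Fin (n + 2) → Γ :=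
  fun k =>
    if (k : ℕ) = 0 then G.inv (f (Fin.last n))
    else if (k : ℕ) = 1 then f 0
    else G.mul (G.inv (f ⟨(k : ℕ) - 2, by have := k.isLt; omega⟩))
      (f ⟨(k : ℕ) - 1, by have := k.isLt; omega⟩)

/-- `ξ_n((α,β), ω) = (α,β)·θ_n(1,ω)` from `G^e ⋆ E^{n-1}G` to `Z^nG`, where `1` is the
unit at the common target `t(α)` of `ω` and `(α,β) ∈ G^e` acts by
`(α,β)·(β_0,β_1,β_2,…) = (β_0α, ββ_1, β_2, …)`. -/
def DGroupoid.xi {X Γ : Type*} (G : DGroupoid X Γ) (n : ℕ) (α β : Γ)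
    (ω : Fin n → Γ) : Fin (n + 2) → Γ :=
  fun k =>
    if (k : ℕ) = 0 then G.mul (G.theta (Fin.cons (G.unit (G.t α)) ω) k) α
    else if (k : ℕ) = 1 then G.mul β (G.theta (Fin.cons (G.unit (G.t α)) ω) k)
    else G.theta (Fin.cons (G.unit (G.t α)) ω) k

open Fin.NatCast in
/-- For a cyclic tuple `g = (α_{n+1}, α_0, α_1, …, α_n) ∈ Z^nG` (so `α_i = g (i+1)`
cyclically), `prods g j = α_1 α_2 ⋯ α_j` is the partial product (with `prods g 0` the
unit at `t(α_1)`). -/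
def DGroupoid.prods {X Γ : Type*} (G : DGroupoid X Γ) (n : ℕ)
    (g : Fin (n + 2) → Γ) : ℕ → Γ
  | 0 => G.unit (G.t (g ((2 : ℕ) : Fin (n + 2))))
  | j + 1 => G.mul (G.prods n g j) (g (((j + 2 : ℕ) : Fin (n + 2))))


section Helpers
variable {X Γ : Type*} (G : DGroupoid X Γ)
open Fin.NatCast

lemma DGroupoid.cancel1 (x y : Γ) (h : G.s x = G.t y) :
    G.mul (G.inv x) (G.mul x y) = y := by
  rw [← G.mul_assoc' _ _ _ (G.s_inv x) h, G.inv_mul, h, G.unit_mul]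

lemma DGroupoid.cancel2 (x y : Γ) (h : G.t x = G.t y) :
    G.mul x (G.mul (G.inv x) y) = y := by
  rw [← G.mul_assoc' _ _ _ (G.t_inv x).symm (by rw [G.s_inv, h]), G.mul_inv, h, G.unit_mul]

lemma DGroupoid.xi_val0 (n : ℕ) (α β : Γ) (ω : Fin n → Γ) (h : 0 < n + 2) :
    G.xi n α β ω ⟨0, h⟩ =
      G.mul (G.inv ((Fin.cons (G.unit (G.t α)) ω : Fin (n+1) → Γ) (Fin.last n))) α := by
  simp [DGroupoid.xi, DGroupoid.theta]

lemma DGroupoid.xi_val1 (n : ℕ) (α β : Γ) (ω : Fin n → Γ) (h : 1 < n + 2) :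
    G.xi n α β ω ⟨1, h⟩ = G.mul β (G.unit (G.t α)) := by
  simp [DGroupoid.xi, DGroupoid.theta]

lemma DGroupoid.xi_val2 (n : ℕ) (α β : Γ) (ω : Fin n → Γ) (m : ℕ) (h : m + 2 < n + 2) :
    G.xi n α β ω ⟨m + 2, h⟩ =
      G.mul (G.inv ((Fin.cons (G.unit (G.t α)) ω : Fin (n+1) → Γ) ⟨m, by omega⟩))
        ((Fin.cons (G.unit (G.t α)) ω : Fin (n+1) → Γ) ⟨m + 1, by omega⟩) := by
  simp [DGroupoid.xi, DGroupoid.theta]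

lemma fin_cst (n : ℕ) : ∀ j : ℕ, ∀ h : j < n + 2, ((j : ℕ) : Fin (n+2)) = ⟨j, h⟩ := by
  intro j h; ext; simp [Fin.val_cast_of_lt h]

lemma fin_cst0 (n : ℕ) : ((n + 2 : ℕ) : Fin (n+2)) = ⟨0, by omega⟩ := by
  ext; simp [Fin.val_natCast]

lemma fin_one (n : ℕ) : (1 : Fin (n+2)) = ⟨1, by omega⟩ := by ext; simp

lemma fin_add1 (n : ℕ) : ∀ m : ℕ, ∀ h1 : m < n + 2, ∀ h2 : m + 1 < n + 2,
    (⟨m, h1⟩ : Fin (n+2)) + 1 = ⟨m + 1, h2⟩ := by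
  intro m h1 h2; ext; rw [Fin.val_add_one]
  simp [Fin.ext_iff, Fin.last]; omega

lemma fin_add1' (n : ℕ) : (⟨n + 1, by omega⟩ : Fin (n+2)) + 1 = ⟨0, by omega⟩ := by
  ext; rw [Fin.val_add_one]; simp [Fin.ext_iff, Fin.last]

lemma fin_two (n : ℕ) : (⟨1, by omega⟩ : Fin (n+2)) + 1 = ((2 : ℕ) : Fin (n+2)) := by
  cases n with
  | zero => decide
  | succ n' => rw [fin_cst (n'+1) 2 (by omega), fin_add1 (n'+1) 1 (by omega) (by omega)]

end Helpers

open Fin.NatCast in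
/-- `ξ_n : G^e ⋆ E^{n-1}G → Z^nG` is a bijection, with inverse
`ω = (α_{n+1}, α_0, …, α_n) ↦ (φ_n(ω), ψ_n(ω))` where
`φ_n(ω) = (α_1⋯α_{n+1}, α_0) ∈ G^e` and `ψ_n(ω) = (α_1, α_1α_2, …, α_1⋯α_n) ∈
E^{n-1}G`. -/
theorem stmt13 {X Γ : Type*} (G : DGroupoid X Γ) (n : ℕ) :
    (∀ (α β : Γ) (ω : Fin n → Γ),
      G.s α = G.t β → G.t α = G.s β → (∀ i, G.t (ω i) = G.t α) →
      (∀ k : Fin (n + 2), G.s (G.xi n α β ω k) = G.t (G.xi n α β ω (k + 1)))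
      ∧ G.prods n (G.xi n α β ω) (n + 1) = α
      ∧ G.xi n α β ω 1 = β
      ∧ (∀ i : Fin n, G.prods n (G.xi n α β ω) ((i : ℕ) + 1) = ω i))
    ∧ ∀ g : Fin (n + 2) → Γ,
      (∀ k : Fin (n + 2), G.s (g k) = G.t (g (k + 1))) →
      G.xi n (G.prods n g (n + 1)) (g 1) (fun i => G.prods n g ((i : ℕ) + 1)) = g := by
  constructor
  · intro α β ω hst hts hω
    set f : Fin (n+1) → Γ := Fin.cons (G.unit (G.t α)) ω with hf
    have tf : ∀ j : Fin (n+1), G.t (f j) = G.t α := by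
      rintro ⟨(_ | m), hm⟩
      · exact G.t_unit _
      · exact hω ⟨m, by omega⟩
    have f0 : ∀ h : 0 < n + 1, f ⟨0, h⟩ = G.unit (G.t α) := fun _ => rfl
    clear_value f
    set g : Fin (n+2) → Γ := G.xi n α β ω with hg
    clear_value g
    have gv0 : ∀ h : 0 < n + 2, g ⟨0, h⟩ = G.mul (G.inv (f (Fin.last n))) α := by
      intro h; rw [hg, G.xi_val0, hf]
    have gv1 : ∀ h : 1 < n + 2, g ⟨1, h⟩ = β := by
      intro h; rw [hg, G.xi_val1, hts, G.mul_unit]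
    have gv2 : ∀ m : ℕ, ∀ h : m + 2 < n + 2,
        g ⟨m + 2, h⟩ = G.mul (G.inv (f ⟨m, by omega⟩)) (f ⟨m + 1, by omega⟩) := by
      intro m h; rw [hg, G.xi_val2, hf]
    have sg2 : ∀ m : ℕ, ∀ h : m + 2 < n + 2,
        G.s (g ⟨m + 2, h⟩) = G.s (f ⟨m + 1, by omega⟩) := by
      intro m h; rw [gv2 m h]
      exact G.s_mul _ _ (by rw [G.s_inv, tf, tf])
    have tg2 : ∀ m : ℕ, ∀ h : m + 2 < n + 2,
        G.t (g ⟨m + 2, h⟩) = G.s (f ⟨m, by omega⟩) := by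
      intro m h; rw [gv2 m h, G.t_mul _ _ (by rw [G.s_inv, tf, tf]), G.t_inv]
    have tg0 : ∀ h : 0 < n + 2, G.t (g ⟨0, h⟩) = G.s (f (Fin.last n)) := by
      intro h; rw [gv0 h, G.t_mul _ _ (by rw [G.s_inv, tf]), G.t_inv]
    have sgl : ∀ m : ℕ, ∀ h : m + 1 < n + 2,
        G.s (g ⟨m + 1, h⟩) = G.s (f ⟨m, by omega⟩) := by
      rintro (_ | m) h
      · show G.s (g ⟨1, h⟩) = G.s (f ⟨0, by omega⟩)
        rw [gv1 h, f0, G.s_unit]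
        exact hts.symm
      · show G.s (g ⟨m + 2, h⟩) = G.s (f ⟨m + 1, by omega⟩)
        rw [sg2 m h]
    have step : ∀ m : ℕ, ∀ h1 : m < n + 2, ∀ h2 : m + 1 < n + 2,
        G.s (g ⟨m, h1⟩) = G.t (g ⟨m + 1, h2⟩) := by
      rintro (_ | m) h1 h2
      · show G.s (g ⟨0, h1⟩) = G.t (g ⟨1, h2⟩)
        rw [gv0 h1, gv1 h2, G.s_mul _ _ (by rw [G.s_inv, tf]), hst]
      · show G.s (g ⟨m + 1, h1⟩) = G.t (g ⟨m + 2, h2⟩)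
        rw [sgl m h1, tg2 m h2]
    have cyc : ∀ k : Fin (n + 2), G.s (g k) = G.t (g (k + 1)) := by
      rintro ⟨m, hm⟩
      by_cases hm' : m = n + 1
      · subst hm'
        rw [fin_add1' n, tg0, sgl n hm]
        rfl
      · rw [fin_add1 n m hm (by omega)]
        exact step m hm (by omega)
    have tg2' : G.t (g ((2 : ℕ) : Fin (n+2))) = G.t α := by
      rw [← fin_two n, ← cyc ⟨1, by omega⟩, gv1]
      exact hts.symm
    have P : ∀ j : ℕ, ∀ h : j < n + 1, G.prods n g j = f ⟨j, h⟩ := by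
      intro j
      induction j with
      | zero =>
        intro h
        show G.unit (G.t (g ((2 : ℕ) : Fin (n+2)))) = f ⟨0, h⟩
        rw [tg2', f0]
      | succ j ih =>
        intro h
        show G.mul (G.prods n g j) (g ((j + 2 : ℕ) : Fin (n+2))) = f ⟨j + 1, h⟩
        rw [ih (by omega), fin_cst n (j+2) (by omega), gv2 j (by omega)]
        exact G.cancel2 _ _ (by rw [tf, tf])
    have Pn1 : G.prods n g (n + 1) = α := by
      show G.mul (G.prods n g n) (g ((n + 2 : ℕ) : Fin (n+2))) = α
      rw [P n (by omega), fin_cst0 n, gv0 (by omega)]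
      have e : f ⟨n, by omega⟩ = f (Fin.last n) := rfl
      rw [e]
      exact G.cancel2 _ _ (by rw [tf])
    refine ⟨cyc, Pn1, ?_, ?_⟩
    · rw [fin_one n]; exact gv1 (by omega)
    · intro i
      rw [P ((i : ℕ) + 1) (by omega), hf]
      exact congrArg ω (Fin.ext rfl)
  · intro g hc
    have hc' : ∀ m : ℕ, ∀ h1 : m < n + 2, ∀ h2 : m + 1 < n + 2,
        G.s (g ⟨m, h1⟩) = G.t (g ⟨m + 1, h2⟩) := by
      intro m h1 h2
      have := hc ⟨m, h1⟩
      rwa [fin_add1 n m h1 h2] at this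
    have hcl : G.s (g ⟨n + 1, by omega⟩) = G.t (g ⟨0, by omega⟩) := by
      have := hc ⟨n + 1, by omega⟩
      rwa [fin_add1' n] at this
    have tg2' : G.t (g ((2 : ℕ) : Fin (n+2))) = G.s (g ⟨1, by omega⟩) := by
      rw [← fin_two n, ← hc ⟨1, by omega⟩]
    have P : ∀ j : ℕ, ∀ h : j + 1 < n + 2,
        G.s (G.prods n g j) = G.s (g ⟨j + 1, h⟩)
          ∧ G.t (G.prods n g j) = G.s (g ⟨1, by omega⟩) := by
      intro j
      induction j with
      | zero =>
        intro h
        constructor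
        · show G.s (G.unit (G.t (g ((2 : ℕ) : Fin (n+2))))) = _
          rw [G.s_unit, tg2']
        · show G.t (G.unit (G.t (g ((2 : ℕ) : Fin (n+2))))) = _
          rw [G.t_unit, tg2']
      | succ j ih =>
        intro h
        have comp : G.s (G.prods n g j) = G.t (g ⟨j + 2, h⟩) := by
          rw [(ih (by omega)).1]; exact hc' (j+1) (by omega) h
        constructor
        · show G.s (G.mul (G.prods n g j) (g ((j + 2 : ℕ) : Fin (n+2)))) = _
          rw [fin_cst n (j+2) h, G.s_mul _ _ comp]
        · show G.t (G.mul (G.prods n g j) (g ((j + 2 : ℕ) : Fin (n+2)))) = _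
          rw [fin_cst n (j+2) h, G.t_mul _ _ comp, (ih (by omega)).2]
    have An1 : G.prods n g (n + 1) = G.mul (G.prods n g n) (g ⟨0, by omega⟩) := by
      show G.mul (G.prods n g n) (g ((n + 2 : ℕ) : Fin (n+2))) = _
      rw [fin_cst0 n]
    have compn : G.s (G.prods n g n) = G.t (g ⟨0, by omega⟩) := by
      rw [(P n (by omega)).1]; exact hcl
    have tA : G.t (G.prods n g (n + 1)) = G.s (g ⟨1, by omega⟩) := by
      rw [An1, G.t_mul _ _ compn, (P n (by omega)).2]
    set W : Fin n → Γ := fun i => G.prods n g ((i : ℕ) + 1) with hW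
    set f : Fin (n+1) → Γ := Fin.cons (G.unit (G.t (G.prods n g (n+1)))) W with hf
    have fval : ∀ j : ℕ, ∀ h : j < n + 1, f ⟨j, h⟩ = G.prods n g j := by
      rintro (_ | j) h
      · show G.unit (G.t (G.prods n g (n+1))) = G.unit (G.t (g ((2 : ℕ) : Fin (n+2))))
        rw [tA, tg2']
      · rfl
    clear_value W f
    funext k
    rcases k with ⟨(_ | (_ | m)), hm⟩
    · show G.xi n (G.prods n g (n+1)) (g 1) W ⟨0, hm⟩ = g ⟨0, hm⟩
      rw [G.xi_val0, ← hf]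
      have e : f (Fin.last n) = G.prods n g n := fval n (by omega)
      rw [e, An1]
      exact G.cancel1 _ _ compn
    · show G.xi n (G.prods n g (n+1)) (g 1) W ⟨1, hm⟩ = g ⟨1, hm⟩
      rw [G.xi_val1, tA, fin_one n]
      exact G.mul_unit _
    · show G.xi n (G.prods n g (n+1)) (g 1) W ⟨m + 2, hm⟩ = g ⟨m + 2, hm⟩
      rw [G.xi_val2, ← hf, fval m (by omega), fval (m+1) (by omega)]
      show G.mul (G.inv (G.prods n g m))
        (G.mul (G.prods n g m) (g ((m + 2 : ℕ) : Fin (n+2)))) = g ⟨m + 2, hm⟩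
      rw [fin_cst n (m+2) hm]
      refine G.cancel1 _ _ ?_
      rw [(P m (by omega)).1]
      exact hc' (m+1) (by omega) hm
end
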